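/- Let d, d' be positive integers and let the hypothesis h = g ∘ f with f : ℝ^d → ℝ^{d'} an invertible representation function and g : ℝ^{d'} → 𝒴 a labeling function. Let the unseen domain be (μ^{(u)}, f^{(u)}, g^{(u)}) with true hypothesis h^{(u)} = g^{(u)} ∘ f^{(u)}, and the seen domain be (μ^{(s)}, f^{(s)}, g^{(s)}) with true hypothesis h^{(s)} = g^{(s)} ∘ f^{(s)}. Assume the loss function ℓ is nonnegative, symmetric, bounded by a finite positive number L, and satisfies the triangle inequality. Then R^{(u)}(h) ≤ R^{(s)}(h) + L ‖f_# μ^{(u)} − f_# μ^{(s)}‖₁ + σ^{(u,s)}, where σ^{(u,s)} := min{ E_{x∼μ^{(u)}}[ℓ(h^{(u)}(x), h^{(s)}(x))], E_{x∼μ^{(s)}}[ℓ(h^{(u)}(x), h^{(s)}(x))] }. -/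

import Mathlib

open MeasureTheory

/-- The L¹ (total variation) distance between two measures:
`‖μ − ν‖₁ = ∫ |dμ/dλ − dν/dλ| dλ` where `λ = μ + ν` is a common dominating measure. -/
noncomputable def l1Dist {α : Type*} [MeasurableSpace α] (μ ν : Measure α) : ℝ :=
  ∫ x, |(μ.rnDeriv (μ + ν) x).toReal - (ν.rnDeriv (μ + ν) x).toReal| ∂(μ + ν)

/-- **Lemma 1**: for an invertible representation `f` and a loss `ℓ` that is nonnegative,
symmetric, bounded by `L` and satisfies the triangle inequality, the unseen-domain risk of
`h = g ∘ f` is bounded by the seen-domain risk, `L` times the L¹ distance between the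
pushforward representation distributions, and the combined risk `σ^{(u,s)}`. -/
lemma key_transfer {α : Type*} [MeasurableSpace α] (ρ τ : Measure α)
    [IsProbabilityMeasure ρ] [IsProbabilityMeasure τ]
    (ψ : α → ℝ) (hψ : Measurable ψ) (L : ℝ)
    (h0 : ∀ x, 0 ≤ ψ x) (hLb : ∀ x, ψ x ≤ L) :
    ∫ x, ψ x ∂ρ ≤ ∫ x, ψ x ∂τ + L * l1Dist ρ τ := by
  set lam := ρ + τ with hlam
  have hρ : ρ ≪ lam := Measure.absolutelyContinuous_of_le (Measure.le_add_right le_rfl)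
  have hτ : τ ≪ lam := Measure.absolutelyContinuous_of_le (Measure.le_add_left le_rfl)
  have hpint : Integrable (fun x => (ρ.rnDeriv lam x).toReal) lam :=
    Measure.integrable_toReal_rnDeriv
  have hqint : Integrable (fun x => (τ.rnDeriv lam x).toReal) lam :=
    Measure.integrable_toReal_rnDeriv
  have hbd : ∃ C, ∀ x, ‖ψ x‖ ≤ C := ⟨L, fun x => by
    rw [Real.norm_eq_abs, abs_of_nonneg (h0 x)]; exact hLb x⟩
  have hint1 : Integrable (fun x => ψ x * (ρ.rnDeriv lam x).toReal) lam :=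
    hpint.bdd_mul hψ.aestronglyMeasurable (ae_of_all _ hbd.choose_spec)
  have hint2 : Integrable (fun x => ψ x * (τ.rnDeriv lam x).toReal) lam :=
    hqint.bdd_mul hψ.aestronglyMeasurable (ae_of_all _ hbd.choose_spec)
  have e1 : ∫ x, ψ x ∂ρ = ∫ x, (ρ.rnDeriv lam x).toReal * ψ x ∂lam := by
    rw [← MeasureTheory.integral_rnDeriv_smul hρ (f := ψ)]; simp [smul_eq_mul]
  have e2 : ∫ x, ψ x ∂τ = ∫ x, (τ.rnDeriv lam x).toReal * ψ x ∂lam := by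
    rw [← MeasureTheory.integral_rnDeriv_smul hτ (f := ψ)]; simp [smul_eq_mul]
  have hint1' : Integrable (fun x => (ρ.rnDeriv lam x).toReal * ψ x) lam := by
    simpa [mul_comm] using hint1
  have hint2' : Integrable (fun x => (τ.rnDeriv lam x).toReal * ψ x) lam := by
    simpa [mul_comm] using hint2
  have hdiff : ∫ x, (ρ.rnDeriv lam x).toReal * ψ x ∂lam
      - ∫ x, (τ.rnDeriv lam x).toReal * ψ x ∂lam
      ≤ L * l1Dist ρ τ := by
    rw [← integral_sub hint1' hint2']
    have habs : Integrable (fun x =>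
        L * |(ρ.rnDeriv lam x).toReal - (τ.rnDeriv lam x).toReal|) lam :=
      ((hpint.sub hqint).abs).const_mul L
    have hmono : ∀ x, (ρ.rnDeriv lam x).toReal * ψ x - (τ.rnDeriv lam x).toReal * ψ x
        ≤ L * |(ρ.rnDeriv lam x).toReal - (τ.rnDeriv lam x).toReal| := by
      intro x
      have h : (ρ.rnDeriv lam x).toReal * ψ x - (τ.rnDeriv lam x).toReal * ψ x
          = ((ρ.rnDeriv lam x).toReal - (τ.rnDeriv lam x).toReal) * ψ x := by ring
      rw [h]
      calc ((ρ.rnDeriv lam x).toReal - (τ.rnDeriv lam x).toReal) * ψ x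
          ≤ |(ρ.rnDeriv lam x).toReal - (τ.rnDeriv lam x).toReal| * ψ x :=
            mul_le_mul_of_nonneg_right (le_abs_self _) (h0 x)
        _ ≤ |(ρ.rnDeriv lam x).toReal - (τ.rnDeriv lam x).toReal| * L :=
            mul_le_mul_of_nonneg_left (hLb x) (abs_nonneg _)
        _ = L * |(ρ.rnDeriv lam x).toReal - (τ.rnDeriv lam x).toReal| := mul_comm _ _
    calc ∫ x, ((ρ.rnDeriv lam x).toReal * ψ x - (τ.rnDeriv lam x).toReal * ψ x) ∂lam
        ≤ ∫ x, L * |(ρ.rnDeriv lam x).toReal - (τ.rnDeriv lam x).toReal| ∂lam :=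
          integral_mono (hint1'.sub hint2') habs hmono
      _ = L * l1Dist ρ τ := by rw [l1Dist, ← integral_const_mul]
  linarith [e1, e2, hdiff]

lemma integrable_of_bounds {α : Type*} [MeasurableSpace α] (μ : Measure α)
    [IsFiniteMeasure μ] (φ : α → ℝ) (hφ : Measurable φ) (C : ℝ)
    (h0 : ∀ x, 0 ≤ φ x) (hC : ∀ x, φ x ≤ C) : Integrable φ μ :=
  Integrable.mono' (integrable_const C) hφ.aestronglyMeasurable
    (Filter.Eventually.of_forall fun x => by
      rw [Real.norm_eq_abs, abs_of_nonneg (h0 x)]; exact hC x)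

theorem lemma1_seen_unseen_risk_bound
    (d d' : ℕ) (hd : 0 < d) (hd' : 0 < d') {Y : Type*} [MeasurableSpace Y]
    (μu μs : Measure (EuclideanSpace ℝ (Fin d)))
    [IsProbabilityMeasure μu] [IsProbabilityMeasure μs]
    (f fu fs : EuclideanSpace ℝ (Fin d) → EuclideanSpace ℝ (Fin d'))
    (g gu gs : EuclideanSpace ℝ (Fin d') → Y)
    (hf : Measurable f) (hfu : Measurable fu) (hfs : Measurable fs)
    (hg : Measurable g) (hgu : Measurable gu) (hgs : Measurable gs)
    (hfinv : Function.Bijective f)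
    (ℓ : Y → Y → ℝ) (L : ℝ) (hL : 0 < L)
    (hℓmeas : Measurable (Function.uncurry ℓ))
    (hℓnonneg : ∀ a b, 0 ≤ ℓ a b)
    (hℓsymm : ∀ a b, ℓ a b = ℓ b a)
    (hℓbdd : ∀ a b, ℓ a b ≤ L)
    (hℓtri : ∀ a b c, ℓ a c ≤ ℓ a b + ℓ b c) :
    ∫ x, ℓ (g (f x)) (gu (fu x)) ∂μu ≤
      (∫ x, ℓ (g (f x)) (gs (fs x)) ∂μs)
      + L * l1Dist (μu.map f) (μs.map f)
      + min (∫ x, ℓ (gu (fu x)) (gs (fs x)) ∂μu)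
            (∫ x, ℓ (gu (fu x)) (gs (fs x)) ∂μs) := by
  haveI : IsProbabilityMeasure (μu.map f) := Measure.isProbabilityMeasure_map hf.aemeasurable
  haveI : IsProbabilityMeasure (μs.map f) := Measure.isProbabilityMeasure_map hf.aemeasurable
  have hemb : MeasurableEmbedding f := hf.measurableEmbedding hfinv.injective
  set eq := Equiv.ofBijective f hfinv with heq
  have hsymm : Measurable eq.symm := by
    intro s hs
    have h : eq.symm ⁻¹' s = f '' s := by
      rw [← Equiv.image_eq_preimage_symm]; rfl
    rw [h]; exact hemb.measurableSet_image' hs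
  -- measurable compositions
  have mconst : ∀ (a b : EuclideanSpace ℝ (Fin d) → Y), Measurable a → Measurable b →
      Measurable (fun x => ℓ (a x) (b x)) := fun a b ha hb =>
    hℓmeas.comp (ha.prodMk hb)
  set φ1 : EuclideanSpace ℝ (Fin d) → ℝ := fun x => ℓ (g (f x)) (gs (fs x)) with hφ1def
  set φ2 : EuclideanSpace ℝ (Fin d) → ℝ := fun x => ℓ (g (f x)) (gu (fu x)) with hφ2def
  set m : EuclideanSpace ℝ (Fin d) → ℝ := fun x => ℓ (gu (fu x)) (gs (fs x)) with hmdef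
  have hφ1 : Measurable φ1 := mconst _ _ (hg.comp hf) (hgs.comp hfs)
  have hφ2 : Measurable φ2 := mconst _ _ (hg.comp hf) (hgu.comp hfu)
  have hm : Measurable m := mconst _ _ (hgu.comp hfu) (hgs.comp hfs)
  -- transfer lemma for bounded measurable φ
  have transfer : ∀ (φ : EuclideanSpace ℝ (Fin d) → ℝ), Measurable φ →
      (∀ x, 0 ≤ φ x) → (∀ x, φ x ≤ L) →
      ∫ x, φ x ∂μu ≤ ∫ x, φ x ∂μs + L * l1Dist (μu.map f) (μs.map f) := by
    intro φ hφ h0 hLb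
    set ψ : EuclideanSpace ℝ (Fin d') → ℝ := fun z => φ (eq.symm z) with hψdef
    have hψ : Measurable ψ := hφ.comp hsymm
    have hcomp : ∀ x, ψ (f x) = φ x := fun x => by
      simp only [hψdef]
      congr 1
      exact eq.symm_apply_apply x
    have eu : ∫ x, φ x ∂μu = ∫ z, ψ z ∂(μu.map f) := by
      rw [integral_map hf.aemeasurable hψ.aestronglyMeasurable]
      exact integral_congr_ae (Filter.Eventually.of_forall fun x => (hcomp x).symm)
    have es : ∫ x, φ x ∂μs = ∫ z, ψ z ∂(μs.map f) := by
      rw [integral_map hf.aemeasurable hψ.aestronglyMeasurable]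
      exact integral_congr_ae (Filter.Eventually.of_forall fun x => (hcomp x).symm)
    rw [eu, es]
    exact key_transfer _ _ ψ hψ L (fun z => h0 _) (fun z => hLb _)
  have key1 : ∫ x, φ1 x ∂μu ≤ ∫ x, φ1 x ∂μs + L * l1Dist (μu.map f) (μs.map f) :=
    transfer φ1 hφ1 (fun x => hℓnonneg _ _) (fun x => hℓbdd _ _)
  have key2 : ∫ x, φ2 x ∂μu ≤ ∫ x, φ2 x ∂μs + L * l1Dist (μu.map f) (μs.map f) :=
    transfer φ2 hφ2 (fun x => hℓnonneg _ _) (fun x => hℓbdd _ _)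
  have int1u : Integrable φ1 μu := integrable_of_bounds μu φ1 hφ1 L (fun x => hℓnonneg _ _) (fun x => hℓbdd _ _)
  have int1s : Integrable φ1 μs := integrable_of_bounds μs φ1 hφ1 L (fun x => hℓnonneg _ _) (fun x => hℓbdd _ _)
  have int2u : Integrable φ2 μu := integrable_of_bounds μu φ2 hφ2 L (fun x => hℓnonneg _ _) (fun x => hℓbdd _ _)
  have int2s : Integrable φ2 μs := integrable_of_bounds μs φ2 hφ2 L (fun x => hℓnonneg _ _) (fun x => hℓbdd _ _)
  have intmu : Integrable m μu := integrable_of_bounds μu m hm L (fun x => hℓnonneg _ _) (fun x => hℓbdd _ _)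
  have intms : Integrable m μs := integrable_of_bounds μs m hm L (fun x => hℓnonneg _ _) (fun x => hℓbdd _ _)
  have tri : ∀ x, φ2 x ≤ φ1 x + m x := by
    intro x
    calc φ2 x ≤ ℓ (g (f x)) (gs (fs x)) + ℓ (gs (fs x)) (gu (fu x)) := hℓtri _ _ _
      _ = φ1 x + m x := by rw [hℓsymm (gs (fs x)) (gu (fu x))]
  -- branch A
  have branchA : ∫ x, φ2 x ∂μu ≤ ∫ x, φ1 x ∂μs + L * l1Dist (μu.map f) (μs.map f) + ∫ x, m x ∂μu := by
    have h1 : ∫ x, φ2 x ∂μu ≤ ∫ x, (φ1 x + m x) ∂μu :=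
      integral_mono int2u (int1u.add intmu) tri
    rw [integral_add int1u intmu] at h1
    linarith [key1]
  -- branch B
  have branchB : ∫ x, φ2 x ∂μu ≤ ∫ x, φ1 x ∂μs + L * l1Dist (μu.map f) (μs.map f) + ∫ x, m x ∂μs := by
    have h1 : ∫ x, φ2 x ∂μs ≤ ∫ x, (φ1 x + m x) ∂μs :=
      integral_mono int2s (int1s.add intms) tri
    rw [integral_add int1s intms] at h1
    linarith [key2]
  rcases le_total (∫ x, m x ∂μu) (∫ x, m x ∂μs) with h | h
  · rw [min_eq_left h]; exact branchA
  · rw [min_eq_right h]; exact branchB
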